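/- Let G = ({a_1, …, a_n} × {a_1, …, a_n}, u) and G' = ({a'_1, …, a'_{n'}} × {a'_1, …, a'_{n'}}, u') be two-player normal-form games whose utilities take values in [0, 1] and such that in each game each player attains utility 0 at some outcome and utility 1 at some outcome. Define Ĝ as the two-player game in which each player's action set is {a_1, …, a_n} ∪ {â_1, …, â_n} and whose payoffs are: û(a_k, a_l) = u(a_k, a_l); û(a_k, â_l) = û(â_k, a_l) = (1, 1) if k = l and (−1, −1) if k ≠ l; and û(â_k, â_l) = (0, 0); and define Ĝ' from G' analogously. Then: (i) Ĝ and Ĝ' contain no strictly dominated actions; and (ii) G is isomorphic to G' if and only if Ĝ is isomorphic to Ĝ'. -/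

import Mathlib

namespace SPIs

/-- Action `x` of Player 1 is strictly dominated in the two-player game with common action
type and utility function `u`. -/
def Dominated1 {A : Type*} (u : A → A → Fin 2 → ℝ) (x : A) : Prop :=
  ∃ x', ∀ y, u x y 0 < u x' y 0

/-- Action `y` of Player 2 is strictly dominated in the two-player game `u`. -/
def Dominated2 {A : Type*} (u : A → A → Fin 2 → ℝ) (y : A) : Prop :=
  ∃ y', ∀ x, u x y 1 < u x y' 1

/-- The two-player game `u` contains no strictly dominated actions. -/
def NoDominated {A : Type*} (u : A → A → Fin 2 → ℝ) : Prop :=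
  (∀ x, ¬ Dominated1 u x) ∧ (∀ y, ¬ Dominated2 u y)

/-- The two-player games `u` and `u'` are isomorphic. -/
def TwoIso {A B : Type*} (u : A → A → Fin 2 → ℝ) (u' : B → B → Fin 2 → ℝ) : Prop :=
  ∃ φ₁ φ₂ : A → B, Function.Bijective φ₁ ∧ Function.Bijective φ₂ ∧
    ∃ m b : Fin 2 → ℝ, (∀ i, 0 < m i) ∧
      ∀ x y i, u' (φ₁ x) (φ₂ y) i = m i * u x y i + b i

/-- The game `Ĝ` constructed from `G = (A × A, u)`: each player's action set is
`A ⊕ A = {a_1, …, a_n} ∪ {â_1, …, â_n}`, payoffs are `u` on the original actions, a matching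
game (`(1,1)` on the diagonal, `(−1,−1)` off it) on mixed original/hatted pairs, and `(0,0)`
on pairs of hatted actions. -/
def hatU {A : Type*} [DecidableEq A] (u : A → A → Fin 2 → ℝ) :
    A ⊕ A → A ⊕ A → Fin 2 → ℝ
  | Sum.inl k, Sum.inl l => u k l
  | Sum.inl k, Sum.inr l => fun _ => if k = l then 1 else -1
  | Sum.inr k, Sum.inl l => fun _ => if k = l then 1 else -1
  | Sum.inr _, Sum.inr _ => fun _ => 0


section Aux

variable {A B : Type*}

lemma hatU_le_one [DecidableEq A] {u : A → A → Fin 2 → ℝ}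
    (hu01 : ∀ x y i, u x y i ∈ Set.Icc (0:ℝ) 1) (x y : A ⊕ A) (i : Fin 2) :
    hatU u x y i ≤ 1 := by
  rcases x with k | k <;> rcases y with l | l <;> simp only [hatU] <;>
    first
      | exact (hu01 k l i).2
      | (split_ifs <;> norm_num)
      | norm_num

lemma neg_one_le_hatU [DecidableEq A] {u : A → A → Fin 2 → ℝ}
    (hu01 : ∀ x y i, u x y i ∈ Set.Icc (0:ℝ) 1) (x y : A ⊕ A) (i : Fin 2) :
    -1 ≤ hatU u x y i := by
  rcases x with k | k <;> rcases y with l | l <;> simp only [hatU] <;>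
    first
      | linarith [(hu01 k l i).1]
      | (split_ifs <;> norm_num)
      | norm_num

lemma noDom_hatU [DecidableEq A] {u : A → A → Fin 2 → ℝ}
    (hu01 : ∀ x y i, u x y i ∈ Set.Icc (0:ℝ) 1) : NoDominated (hatU u) := by
  constructor
  · rintro (k | k) ⟨x', hx⟩
    · have h1 := hx (Sum.inr k)
      simp only [hatU, if_pos rfl] at h1
      exact absurd h1 (not_lt.2 (hatU_le_one hu01 x' (Sum.inr k) 0))
    · have h1 := hx (Sum.inl k)
      simp only [hatU, if_pos rfl] at h1
      exact absurd h1 (not_lt.2 (hatU_le_one hu01 x' (Sum.inl k) 0))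
  · rintro (l | l) ⟨y', hy⟩
    · have h1 := hy (Sum.inr l)
      simp only [hatU, if_pos rfl] at h1
      exact absurd h1 (not_lt.2 (hatU_le_one hu01 (Sum.inr l) y' 1))
    · have h1 := hy (Sum.inl l)
      simp only [hatU, if_pos rfl] at h1
      exact absurd h1 (not_lt.2 (hatU_le_one hu01 (Sum.inl l) y' 1))

lemma key [DecidableEq A] [DecidableEq B]
    {u : A → A → Fin 2 → ℝ} {u' : B → B → Fin 2 → ℝ}
    {Φ₁ Φ₂ : A ⊕ A → B ⊕ B}
    (h2 : ∃ a₁ a₂ : A, a₁ ≠ a₂)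
    (hu'01 : ∀ x y i, u' x y i ∈ Set.Icc (0:ℝ) 1)
    (hu1 : ∃ x y, u x y 0 = 1)
    (H : ∀ x y i, hatU u' (Φ₁ x) (Φ₂ y) i = hatU u x y i)
    (k : A) : ∃ k', Φ₁ (Sum.inl k) = Sum.inl k' := by
  rcases hc : Φ₁ (Sum.inl k) with k' | k'
  · exact ⟨k', rfl⟩
  exfalso
  have step2 : ∀ l : A, ∃ m, Φ₂ (Sum.inr l) = Sum.inl m := by
    intro l
    have h := H (Sum.inl k) (Sum.inr l) 0
    rw [hc] at h
    rcases hd : Φ₂ (Sum.inr l) with m | m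
    · exact ⟨m, rfl⟩
    · rw [hd] at h
      simp only [hatU] at h
      split_ifs at h <;> norm_num at h
  have stepA : ∀ x : A, ∃ r, Φ₁ (Sum.inl x) = Sum.inr r := by
    intro x
    rcases hd : Φ₁ (Sum.inl x) with q | q
    · exfalso
      obtain ⟨a₁, a₂, ha⟩ := h2
      have hx : ∀ l : A, x = l := by
        intro l
        obtain ⟨m, hm⟩ := step2 l
        have h := H (Sum.inl x) (Sum.inr l) 0
        rw [hd, hm] at h
        simp only [hatU] at h
        by_contra hne
        rw [if_neg hne] at h
        have := (hu'01 q m 0).1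
        linarith
      exact ha ((hx a₁).symm.trans (hx a₂))
    · exact ⟨q, rfl⟩
  obtain ⟨mk, hmk⟩ := step2 k
  have step3 : ∀ l : A, ∃ p, Φ₁ (Sum.inr l) = Sum.inl p := by
    intro l
    have h := H (Sum.inr l) (Sum.inr k) 0
    rw [hmk] at h
    rcases hd : Φ₁ (Sum.inr l) with p | p
    · exact ⟨p, rfl⟩
    · rw [hd] at h
      simp only [hatU] at h
      split_ifs at h <;> norm_num at h
  have stepB : ∀ y : A, ∃ s, Φ₂ (Sum.inl y) = Sum.inr s := by
    intro y
    rcases hd : Φ₂ (Sum.inl y) with q | q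
    · exfalso
      obtain ⟨a₁, a₂, ha⟩ := h2
      have hy : ∀ l : A, l = y := by
        intro l
        obtain ⟨p, hp⟩ := step3 l
        have h := H (Sum.inr l) (Sum.inl y) 0
        rw [hp, hd] at h
        simp only [hatU] at h
        by_contra hne
        rw [if_neg hne] at h
        have := (hu'01 p q 0).1
        linarith
      exact ha ((hy a₁).trans (hy a₂).symm)
    · exact ⟨q, rfl⟩
  obtain ⟨x, y, hxy⟩ := hu1
  obtain ⟨r, hr⟩ := stepA x
  obtain ⟨s, hs⟩ := stepB y
  have h := H (Sum.inl x) (Sum.inl y) 0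
  rw [hr, hs] at h
  simp only [hatU] at h
  rw [hxy] at h
  norm_num at h

/-- the transposed game -/
def tr (u : A → A → Fin 2 → ℝ) : A → A → Fin 2 → ℝ :=
  fun x y i => u y x (1 - i)

lemma hatU_tr [DecidableEq A] (u : A → A → Fin 2 → ℝ) (x y : A ⊕ A) (i : Fin 2) :
    hatU (tr u) x y i = hatU u y x (1 - i) := by
  rcases x with k | k <;> rcases y with l | l <;>
    simp only [hatU, tr] <;> simp [eq_comm]

lemma iso_unit {u : A → A → Fin 2 → ℝ} {u' : B → B → Fin 2 → ℝ}
    {φ₁ φ₂ : A → B} {m b : Fin 2 → ℝ}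
    (hu01 : ∀ x y i, u x y i ∈ Set.Icc (0:ℝ) 1)
    (hu'01 : ∀ x y i, u' x y i ∈ Set.Icc (0:ℝ) 1)
    (hu0 : ∀ i, ∃ x y, u x y i = 0) (hu1 : ∀ i, ∃ x y, u x y i = 1)
    (hu'0 : ∀ i, ∃ x y, u' x y i = 0) (hu'1 : ∀ i, ∃ x y, u' x y i = 1)
    (hb1 : Function.Bijective φ₁) (hb2 : Function.Bijective φ₂)
    (hm : ∀ i, 0 < m i)
    (heq : ∀ x y i, u' (φ₁ x) (φ₂ y) i = m i * u x y i + b i) (i : Fin 2) :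
    m i = 1 ∧ b i = 0 := by
  obtain ⟨x0, y0, h0⟩ := hu0 i
  obtain ⟨x1, y1, h1⟩ := hu1 i
  obtain ⟨x0', y0', h0'⟩ := hu'0 i
  obtain ⟨x1', y1', h1'⟩ := hu'1 i
  have e0 := heq x0 y0 i
  rw [h0] at e0
  have e1 := heq x1 y1 i
  rw [h1] at e1
  obtain ⟨p0, hp0⟩ := hb1.2 x0'
  obtain ⟨q0, hq0⟩ := hb2.2 y0'
  obtain ⟨p1, hp1⟩ := hb1.2 x1'
  obtain ⟨q1, hq1⟩ := hb2.2 y1'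
  have e0' := heq p0 q0 i
  rw [hp0, hq0, h0'] at e0'
  have e1' := heq p1 q1 i
  rw [hp1, hq1, h1'] at e1'
  have hmi := hm i
  have hb0 : 0 ≤ b i := by
    have := (hu'01 (φ₁ x0) (φ₂ y0) i).1
    rw [e0] at this; linarith
  have hble : b i ≤ 0 := by
    have h00 := (hu01 p0 q0 i).1
    nlinarith
  have hbz : b i = 0 := le_antisymm hble hb0
  have hmle : m i ≤ 1 := by
    have := (hu'01 (φ₁ x1) (φ₂ y1) i).2
    rw [e1] at this; linarith
  have hmge : 1 ≤ m i := by
    have h11 := (hu01 p1 q1 i).2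
    nlinarith
  exact ⟨le_antisymm hmle hmge, hbz⟩

lemma forward [DecidableEq A] [DecidableEq B]
    {u : A → A → Fin 2 → ℝ} {u' : B → B → Fin 2 → ℝ}
    (hu01 : ∀ x y i, u x y i ∈ Set.Icc (0:ℝ) 1)
    (hu'01 : ∀ x y i, u' x y i ∈ Set.Icc (0:ℝ) 1)
    (hu0 : ∀ i, ∃ x y, u x y i = 0) (hu1 : ∀ i, ∃ x y, u x y i = 1)
    (hu'0 : ∀ i, ∃ x y, u' x y i = 0) (hu'1 : ∀ i, ∃ x y, u' x y i = 1)
    (h : TwoIso u u') : TwoIso (hatU u) (hatU u') := by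
  obtain ⟨φ₁, φ₂, hb1, hb2, m, b, hm, heq⟩ := h
  have hmb := iso_unit hu01 hu'01 hu0 hu1 hu'0 hu'1 hb1 hb2 hm heq
  refine ⟨Sum.map φ₁ φ₂, Sum.map φ₂ φ₁, hb1.sumMap hb2, hb2.sumMap hb1,
    fun _ => 1, fun _ => 0, fun _ => one_pos, ?_⟩
  rintro (k | k) (l | l) i <;> simp only [Sum.map_inl, Sum.map_inr, hatU, one_mul, add_zero]
  · rw [heq k l i, (hmb i).1, (hmb i).2]; ring
  · simp [hb1.1.eq_iff]
  · simp [hb2.1.eq_iff]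

lemma two_elems {u : A → A → Fin 2 → ℝ}
    (hu0 : ∃ x y, u x y 0 = 0) (hu1 : ∃ x y, u x y 0 = 1) :
    ∃ a₁ a₂ : A, a₁ ≠ a₂ := by
  obtain ⟨x, y, h0⟩ := hu0
  obtain ⟨x', y', h1⟩ := hu1
  by_contra hc
  push_neg at hc
  rw [hc x x', hc y y', h1] at h0
  norm_num at h0

lemma backward [Nonempty B] [DecidableEq A] [DecidableEq B]
    {u : A → A → Fin 2 → ℝ} {u' : B → B → Fin 2 → ℝ}
    (hu01 : ∀ x y i, u x y i ∈ Set.Icc (0:ℝ) 1)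
    (hu'01 : ∀ x y i, u' x y i ∈ Set.Icc (0:ℝ) 1)
    (hu0 : ∀ i, ∃ x y, u x y i = 0) (hu1 : ∀ i, ∃ x y, u x y i = 1)
    (hu'0 : ∀ i, ∃ x y, u' x y i = 0) (hu'1 : ∀ i, ∃ x y, u' x y i = 1)
    (h : TwoIso (hatU u) (hatU u')) : TwoIso u u' := by
  obtain ⟨Φ₁, Φ₂, hB1, hB2, M, Bc, hM, heq⟩ := h
  obtain ⟨a₁, a₂, hane⟩ : ∃ a₁ a₂ : A, a₁ ≠ a₂ := two_elems (hu0 0) (hu1 0)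
  obtain ⟨b₁, b₂, hbne⟩ : ∃ b₁ b₂ : B, b₁ ≠ b₂ := two_elems (hu'0 0) (hu'1 0)
  have hMB : ∀ i, M i = 1 ∧ Bc i = 0 := by
    intro i
    have e1 : hatU u (Sum.inl a₁) (Sum.inr a₁) i = 1 := by simp [hatU]
    have e2 : hatU u (Sum.inl a₁) (Sum.inr a₂) i = -1 := by simp [hatU, hane]
    have f1 := heq (Sum.inl a₁) (Sum.inr a₁) i
    have f2 := heq (Sum.inl a₁) (Sum.inr a₂) i
    rw [e1] at f1
    rw [e2] at f2
    have f1' : M i * 1 + Bc i ≤ 1 := by rw [← f1]; exact hatU_le_one hu'01 _ _ i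
    have f2' : -1 ≤ M i * (-1) + Bc i := by rw [← f2]; exact neg_one_le_hatU hu'01 _ _ i
    obtain ⟨x1, hx1⟩ := hB1.2 (Sum.inl b₁)
    obtain ⟨y1, hy1⟩ := hB2.2 (Sum.inr b₁)
    obtain ⟨y2, hy2⟩ := hB2.2 (Sum.inr b₂)
    have e1' : hatU u' (Sum.inl b₁) (Sum.inr b₁) i = 1 := by simp [hatU]
    have e2' : hatU u' (Sum.inl b₁) (Sum.inr b₂) i = -1 := by simp [hatU, hbne]
    have g1 := heq x1 y1 i
    rw [hx1, hy1, e1'] at g1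
    have g2 := heq x1 y2 i
    rw [hx1, hy2, e2'] at g2
    have hle := hatU_le_one hu01 x1 y1 i
    have hge := neg_one_le_hatU hu01 x1 y2 i
    have hMi := hM i
    have p1 : M i * hatU u x1 y1 i ≤ M i * 1 := mul_le_mul_of_nonneg_left hle hMi.le
    have p2 : M i * (-1) ≤ M i * hatU u x1 y2 i := mul_le_mul_of_nonneg_left hge hMi.le
    constructor <;> linarith
  have H : ∀ x y i, hatU u' (Φ₁ x) (Φ₂ y) i = hatU u x y i := by
    intro x y i
    rw [heq x y i, (hMB i).1, (hMB i).2]; ring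
  have K1 : ∀ k, ∃ k', Φ₁ (Sum.inl k) = Sum.inl k' :=
    fun k => key ⟨a₁, a₂, hane⟩ hu'01 (hu1 0) H k
  have H' : ∀ x y i, hatU (tr u') (Φ₂ x) (Φ₁ y) i = hatU (tr u) x y i := by
    intro x y i
    rw [hatU_tr, hatU_tr]
    exact H y x (1 - i)
  have htr1 : ∃ x y, tr u x y 0 = 1 := by
    obtain ⟨x, y, hxy⟩ := hu1 1
    refine ⟨y, x, ?_⟩
    have h10 : (1 - 0 : Fin 2) = 1 := by decide
    simp only [tr, h10]
    exact hxy
  have K2 : ∀ k, ∃ k', Φ₂ (Sum.inl k) = Sum.inl k' :=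
    fun k => key ⟨a₁, a₂, hane⟩ (fun x y i => hu'01 y x (1 - i)) htr1 H' k
  have K1r : ∀ k, ∃ k', Φ₁ (Sum.inr k) = Sum.inr k' := by
    intro k
    rcases hd : Φ₁ (Sum.inr k) with j' | j'
    · exfalso
      have hall : ∀ z, ∃ m, Φ₂ z = Sum.inl m := by
        rintro (l | l)
        · exact K2 l
        · have h := H (Sum.inr k) (Sum.inr l) 0
          rw [hd] at h
          rcases he : Φ₂ (Sum.inr l) with m | m
          · exact ⟨m, rfl⟩
          · rw [he] at h
            simp only [hatU] at h
            split_ifs at h <;> norm_num at h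
      obtain ⟨b₀⟩ := ‹Nonempty B›
      obtain ⟨z, hz⟩ := hB2.2 (Sum.inr b₀)
      obtain ⟨m, hm⟩ := hall z
      rw [hm] at hz
      simp at hz
    · exact ⟨j', rfl⟩
  have K2r : ∀ k, ∃ k', Φ₂ (Sum.inr k) = Sum.inr k' := by
    intro k
    rcases hd : Φ₂ (Sum.inr k) with j' | j'
    · exfalso
      obtain ⟨p, hp⟩ := K1r k
      have h := H (Sum.inr k) (Sum.inr k) 0
      rw [hd, hp] at h
      simp only [hatU] at h
      split_ifs at h <;> norm_num at h
    · exact ⟨j', rfl⟩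
  choose φ₁ hφ₁ using K1
  choose φ₂ hφ₂ using K2
  refine ⟨φ₁, φ₂, ⟨?_, ?_⟩, ⟨?_, ?_⟩,
    fun _ => 1, fun _ => 0, fun _ => one_pos, ?_⟩
  · intro a b hab
    have h1 : Φ₁ (Sum.inl a) = Φ₁ (Sum.inl b) := by
      rw [hφ₁ a, hφ₁ b, hab]
    exact Sum.inl_injective (hB1.1 h1)
  · intro c
    obtain ⟨z, hz⟩ := hB1.2 (Sum.inl c)
    rcases z with x | x
    · rw [hφ₁ x] at hz
      exact ⟨x, Sum.inl_injective hz⟩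
    · obtain ⟨p, hp⟩ := K1r x
      rw [hp] at hz
      simp at hz
  · intro a b hab
    have h1 : Φ₂ (Sum.inl a) = Φ₂ (Sum.inl b) := by
      rw [hφ₂ a, hφ₂ b, hab]
    exact Sum.inl_injective (hB2.1 h1)
  · intro c
    obtain ⟨z, hz⟩ := hB2.2 (Sum.inl c)
    rcases z with x | x
    · rw [hφ₂ x] at hz
      exact ⟨x, Sum.inl_injective hz⟩
    · obtain ⟨p, hp⟩ := K2r x
      rw [hp] at hz
      simp at hz
  · intro x y i
    have h := H (Sum.inl x) (Sum.inl y) i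
    rw [hφ₁ x, hφ₂ y] at h
    simp only [hatU] at h
    rw [h]; ring

end Aux

/-- reduction in Theorem 10 of the paper: for games `G`, `G'` with
utilities in `[0,1]` attaining `0` and `1` for each player, the constructed games `Ĝ`, `Ĝ'`
have no strictly dominated actions, and `G ≅ G'` iff `Ĝ ≅ Ĝ'`. -/
theorem hat_construction {A B : Type*} [Fintype A] [Fintype B] [Nonempty A] [Nonempty B]
    [DecidableEq A] [DecidableEq B]
    (u : A → A → Fin 2 → ℝ) (u' : B → B → Fin 2 → ℝ)
    (hu01 : ∀ x y i, u x y i ∈ Set.Icc (0 : ℝ) 1)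
    (hu'01 : ∀ x y i, u' x y i ∈ Set.Icc (0 : ℝ) 1)
    (hu0 : ∀ i, ∃ x y, u x y i = 0) (hu1 : ∀ i, ∃ x y, u x y i = 1)
    (hu'0 : ∀ i, ∃ x y, u' x y i = 0) (hu'1 : ∀ i, ∃ x y, u' x y i = 1) :
    NoDominated (hatU u) ∧ NoDominated (hatU u') ∧
      (TwoIso u u' ↔ TwoIso (hatU u) (hatU u')) := by
  exact ⟨noDom_hatU hu01, noDom_hatU hu'01,
    forward hu01 hu'01 hu0 hu1 hu'0 hu'1,
    backward hu01 hu'01 hu0 hu1 hu'0 hu'1⟩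

end SPIs
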